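/- arXiv:1505.00443 — 2 statements merged into one kernel-verified Lean document; each statement's English description precedes it below -/
import Mathlib

section
/- For every real number 0 < α < 1/(2e), there exist β > 1 and n₀ ∈ ℕ such that for every partition λ of n ≥ n₀ with max(λ₁, λ'₁) < αn, the number of standard Young tableaux of shape λ is at least β^n. -/
/-- Hook length of the cell `(i, j)` (0-indexed) of a Young diagram. -/
def hook (μ : YoungDiagram) (i j : ℕ) : ℕ :=
  (μ.rowLen i - j) + (μ.colLen j - i) - 1

/-- The number of standard Young tableaux of shape `μ`. -/
noncomputable def sytCard (μ : YoungDiagram) : ℕ :=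
  Nat.card {T : μ.cells → Fin μ.card //
    Function.Bijective T ∧
    ∀ c d : μ.cells, (c : ℕ × ℕ).1 ≤ (d : ℕ × ℕ).1 → (c : ℕ × ℕ).2 ≤ (d : ℕ × ℕ).2 →
      c ≠ d → T c < T d}

namespace SYTaux

open Finset

variable (μ : YoungDiagram)

/-- A pair of rows `(2t, 2t+1)` is *good* if the second row has length ≥ 2 and
the first row is at most 3 times the second. -/
def goodt (t : ℕ) : Prop :=
  2 ≤ μ.rowLen (2*t+1) ∧ μ.rowLen (2*t) ≤ 3 * μ.rowLen (2*t+1)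

instance : DecidablePred (goodt μ) := fun _ => instDecidableAnd

/-- The set of good pair indices. -/
def G : Finset ℕ := (Finset.range (μ.colLen 0 / 2)).filter (goodt μ)

/-- Half of the length of the second row of pair `t` (number of 2×2 blocks). -/
def mm (t : ℕ) : ℕ := μ.rowLen (2*t+1) / 2

/-- Index set of all 2×2 blocks in good pairs. -/
def E : Finset (ℕ × ℕ) := (G μ).biUnion (fun t => {t} ×ˢ Finset.range (mm μ t))

def W : ℕ := μ.card + 4

/-- Whether a cell belongs to the block rectangle of its row pair. -/
def inRect (c : ℕ × ℕ) : Prop := (c.1/2) ∈ G μ ∧ c.2 < 2 * mm μ (c.1/2)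

instance : DecidablePred (inRect μ) := fun _ => instDecidableAnd

def phi (c : ℕ × ℕ) : ℕ := 2*(c.1/2) + if inRect μ c then 0 else 1

def psi (A : Finset (ℕ×ℕ)) (c : ℕ × ℕ) : ℕ :=
  if inRect μ c then
    4*(c.2/2) + (if (c.1/2, c.2/2) ∈ A then 2*(c.2%2)+(c.1%2) else 2*(c.1%2)+(c.2%2))
  else c.1 * W μ + c.2

def key (A : Finset (ℕ×ℕ)) (c : ℕ × ℕ) : ℕ := phi μ c * (W μ)^2 + psi μ A c

lemma rowLen_le_card (i : ℕ) : μ.rowLen i ≤ μ.card := by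
  rw [YoungDiagram.rowLen_eq_card]
  exact Finset.card_le_card (fun c hc => (YoungDiagram.mem_cells _).2 (((YoungDiagram.mem_row_iff).1 hc).1))

lemma colLen_le_card (j : ℕ) : μ.colLen j ≤ μ.card := by
  rw [YoungDiagram.colLen_eq_card]
  exact Finset.card_le_card (fun c hc => (YoungDiagram.mem_cells _).2 (((YoungDiagram.mem_col_iff).1 hc).1))

lemma fst_lt_of_mem {c : ℕ × ℕ} (hc : c ∈ μ) : c.1 < μ.colLen 0 := by
  have := YoungDiagram.mem_iff_lt_colLen.1 (show (c.1, c.2) ∈ μ by simpa using hc)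
  exact lt_of_lt_of_le this (μ.colLen_anti 0 c.2 (Nat.zero_le _))

lemma snd_lt_of_mem {c : ℕ × ℕ} (hc : c ∈ μ) : c.2 < μ.rowLen 0 := by
  have := YoungDiagram.mem_iff_lt_rowLen.1 (show (c.1, c.2) ∈ μ by simpa using hc)
  exact lt_of_lt_of_le this (μ.rowLen_anti 0 c.1 (Nat.zero_le _))

lemma psi_lt (A : Finset (ℕ×ℕ)) {c : ℕ × ℕ} (hc : c ∈ μ) : psi μ A c < (W μ)^2 := by
  have h1 : c.1 < μ.card := lt_of_lt_of_le (fst_lt_of_mem μ hc) (colLen_le_card μ 0)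
  have h2 : c.2 < μ.card := lt_of_lt_of_le (snd_lt_of_mem μ hc) (rowLen_le_card μ 0)
  unfold psi W
  split
  · have : 4*(c.2/2) + 4 ≤ 4 * (μ.card + 4) := by omega
    have h4 : 4 * (μ.card + 4) ≤ (μ.card + 4)^2 := by nlinarith
    split <;> omega
  · nlinarith

end SYTaux

namespace SYTaux

variable (μ : YoungDiagram)

lemma euclid {a b a' b' X : ℕ} (hb : b < X) (hb' : b' < X) (h : a*X + b = a'*X + b') :
    a = a' ∧ b = b' := by
  have key : ∀ u v p q : ℕ, p < X → u < v → u*X + p < v*X + q := by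
    intro u v p q hp huv
    calc u*X + p < u*X + X := by omega
    _ = (u+1)*X := by ring
    _ ≤ v*X := Nat.mul_le_mul_right X huv
    _ ≤ v*X + q := Nat.le_add_right _ _
  have ha : a = a' := by
    rcases lt_trichotomy a a' with h'|h'|h'
    · exact absurd (key a a' b b' hb h') (by omega)
    · exact h'
    · exact absurd (key a' a b' b hb' h') (by omega)
  subst ha
  exact ⟨rfl, by omega⟩

lemma phi_mono {c d : ℕ × ℕ} (h1 : c.1 ≤ d.1) (h2 : c.2 ≤ d.2) : phi μ c ≤ phi μ d := by
  have ht : c.1/2 ≤ d.1/2 := Nat.div_le_div_right h1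
  rcases lt_or_eq_of_le ht with h | h
  · unfold phi; split_ifs <;> omega
  · unfold phi
    split_ifs with hc hd hd
    · omega
    · omega
    · refine absurd ⟨?_, ?_⟩ hc
      · rw [h]; exact hd.1
      · rw [h]; have := hd.2; omega
    · omega

lemma phi_eq {c d : ℕ × ℕ} (h : phi μ c = phi μ d) :
    c.1/2 = d.1/2 ∧ (inRect μ c ↔ inRect μ d) := by
  unfold phi at h
  split_ifs at h with h1 h2 h2
  · exact ⟨by omega, iff_of_true h1 h2⟩
  · omega
  · omega
  · exact ⟨by omega, iff_of_false h1 h2⟩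

lemma key_lt_of_phi_lt (A : Finset (ℕ×ℕ)) {c d : ℕ × ℕ} (hc : c ∈ μ)
    (h : phi μ c < phi μ d) : key μ A c < key μ A d := by
  have hψ : psi μ A c < (W μ)^2 := psi_lt μ A hc
  unfold key
  calc phi μ c * (W μ)^2 + psi μ A c < phi μ c * (W μ)^2 + (W μ)^2 := by omega
  _ = (phi μ c + 1) * (W μ)^2 := by ring
  _ ≤ phi μ d * (W μ)^2 := Nat.mul_le_mul_right _ h
  _ ≤ phi μ d * (W μ)^2 + psi μ A d := Nat.le_add_right _ _

lemma key_lt_key (A : Finset (ℕ×ℕ)) {c d : ℕ × ℕ} (hc : c ∈ μ) (hd : d ∈ μ)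
    (h1 : c.1 ≤ d.1) (h2 : c.2 ≤ d.2) (hne : c ≠ d) : key μ A c < key μ A d := by
  rcases lt_or_eq_of_le (phi_mono μ h1 h2) with hlt | heq
  · exact key_lt_of_phi_lt μ A hc hlt
  · obtain ⟨ht, hiff⟩ := phi_eq μ heq
    have hkey : ∀ x y : ℕ, x < y → phi μ c * (W μ)^2 + x < phi μ d * (W μ)^2 + y := by
      intro x y hxy; rw [heq]; omega
    by_cases hrc : inRect μ c
    · have hrd : inRect μ d := hiff.1 hrc
      refine hkey _ _ ?_
      unfold psi
      rw [if_pos hrc, if_pos hrd]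
      have hu : c.2/2 ≤ d.2/2 := Nat.div_le_div_right h2
      rcases lt_or_eq_of_le hu with hu' | hu'
      · split_ifs <;> omega
      · have hpq : ((c.1/2 : ℕ), (c.2/2 : ℕ)) = (d.1/2, d.2/2) := by rw [ht, hu']
        rw [hpq]
        have hne' : ¬ (c.1 = d.1 ∧ c.2 = d.2) := by
          intro ⟨e1, e2⟩; exact hne (Prod.ext e1 e2)
        split_ifs <;> omega
    · have hrd : ¬ inRect μ d := fun h => hrc (hiff.2 h)
      refine hkey _ _ ?_
      unfold psi
      rw [if_neg hrc, if_neg hrd]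
      have hW : c.2 < W μ := by
        have := lt_of_lt_of_le (snd_lt_of_mem μ hc) (rowLen_le_card μ 0)
        unfold W; omega
      rcases lt_or_eq_of_le h1 with hi | hi
      · calc c.1 * W μ + c.2 < c.1 * W μ + W μ := by omega
        _ = (c.1 + 1) * W μ := by ring
        _ ≤ d.1 * W μ := Nat.mul_le_mul_right _ hi
        _ ≤ d.1 * W μ + d.2 := Nat.le_add_right _ _
      · rw [hi]
        have : c.2 < d.2 := by
          rcases lt_or_eq_of_le h2 with h | h
          · exact h
          · exact absurd (Prod.ext hi h) hne
        omega

lemma key_inj (A : Finset (ℕ×ℕ)) {c d : ℕ × ℕ} (hc : c ∈ μ) (hd : d ∈ μ)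
    (h : key μ A c = key μ A d) : c = d := by
  have hφ : phi μ c = phi μ d := by
    rcases lt_trichotomy (phi μ c) (phi μ d) with h'|h'|h'
    · exact absurd (key_lt_of_phi_lt μ A hc h') (by omega)
    · exact h'
    · exact absurd (key_lt_of_phi_lt μ A hd h') (by omega)
  have hψ : psi μ A c = psi μ A d := by
    unfold key at h; rw [hφ] at h; omega
  obtain ⟨ht, hiff⟩ := phi_eq μ hφ
  by_cases hrc : inRect μ c
  · have hrd : inRect μ d := hiff.1 hrc
    unfold psi at hψ
    rw [if_pos hrc, if_pos hrd] at hψ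
    have hu : c.2/2 = d.2/2 := by split_ifs at hψ <;> omega
    have hpq : ((c.1/2 : ℕ), (c.2/2 : ℕ)) = (d.1/2, d.2/2) := by rw [ht, hu]
    rw [hpq] at hψ
    have hr2 : 2*c.1/2 = 2*c.1/2 := rfl
    refine Prod.ext ?_ ?_ <;> split_ifs at hψ <;> omega
  · have hrd : ¬ inRect μ d := fun h => hrc (hiff.2 h)
    unfold psi at hψ
    rw [if_neg hrc, if_neg hrd] at hψ
    have hWc : c.2 < W μ := by
      have := lt_of_lt_of_le (snd_lt_of_mem μ hc) (rowLen_le_card μ 0); unfold W; omega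
    have hWd : d.2 < W μ := by
      have := lt_of_lt_of_le (snd_lt_of_mem μ hd) (rowLen_le_card μ 0); unfold W; omega
    obtain ⟨e1, e2⟩ := euclid hWc hWd hψ
    exact Prod.ext e1 e2

end SYTaux

namespace SYTaux

variable (μ : YoungDiagram)

lemma key_injOn (A : Finset (ℕ×ℕ)) : Set.InjOn (key μ A) μ.cells :=
  fun c hc d hd h => key_inj μ A ((μ.mem_cells c).1 hc) ((μ.mem_cells d).1 hd) h

lemma card_image_key (A : Finset (ℕ×ℕ)) : (μ.cells.image (key μ A)).card = μ.card :=
  Finset.card_image_of_injOn (key_injOn μ A)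

/-- The standard Young tableau associated to a choice set `A`. -/
noncomputable def TT (A : Finset (ℕ×ℕ)) : ↥μ.cells → Fin μ.card := fun c =>
  ((μ.cells.image (key μ A)).orderIsoOfFin (card_image_key μ A)).symm
    ⟨key μ A c.1, Finset.mem_image_of_mem _ c.2⟩

lemma TT_lt_iff (A : Finset (ℕ×ℕ)) (c d : ↥μ.cells) :
    TT μ A c < TT μ A d ↔ key μ A c.1 < key μ A d.1 := by
  unfold TT
  rw [OrderIso.lt_iff_lt]
  exact Subtype.mk_lt_mk

lemma TT_injective (A : Finset (ℕ×ℕ)) : Function.Injective (TT μ A) := by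
  intro c d h
  unfold TT at h
  have := (((μ.cells.image (key μ A)).orderIsoOfFin (card_image_key μ A)).symm).injective h
  have hk : key μ A c.1 = key μ A d.1 := congrArg Subtype.val this
  exact Subtype.ext (key_inj μ A ((μ.mem_cells _).1 c.2) ((μ.mem_cells _).1 d.2) hk)

lemma TT_bijective (A : Finset (ℕ×ℕ)) : Function.Bijective (TT μ A) := by
  rw [Fintype.bijective_iff_injective_and_card]
  exact ⟨TT_injective μ A, by simp [Fintype.card_coe]⟩

lemma TT_mono (A : Finset (ℕ×ℕ)) (c d : ↥μ.cells)
    (h1 : (c : ℕ × ℕ).1 ≤ (d : ℕ × ℕ).1) (h2 : (c : ℕ × ℕ).2 ≤ (d : ℕ × ℕ).2)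
    (hne : c ≠ d) : TT μ A c < TT μ A d := by
  rw [TT_lt_iff]
  exact key_lt_key μ A ((μ.mem_cells _).1 c.2) ((μ.mem_cells _).1 d.2) h1 h2
    (fun h => hne (Subtype.ext h))

lemma subset_of_TT_eq (A B : Finset (ℕ×ℕ)) (h : TT μ A = TT μ B) : A ∩ E μ ⊆ B := by
  intro p hp
  rw [Finset.mem_inter] at hp
  obtain ⟨hpA, hpE⟩ := hp
  rw [E, Finset.mem_biUnion] at hpE
  obtain ⟨t, htG, hpt⟩ := hpE
  rw [Finset.mem_product, Finset.mem_singleton, Finset.mem_range] at hpt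
  obtain ⟨hp1, hp2⟩ := hpt
  by_contra hpB
  -- basic facts
  have hgood : goodt μ t := (Finset.mem_filter.1 htG).2
  have hmm : 2 * mm μ t ≤ μ.rowLen (2*t+1) := by unfold mm; omega
  have hanti := μ.rowLen_anti (2*t) (2*t+1) (by omega)
  have hu : p.2 < mm μ t := hp2
  have hc1m : (2*t, 2*p.2+1) ∈ μ := YoungDiagram.mem_iff_lt_rowLen.2 (by omega)
  have hc2m : (2*t+1, 2*p.2) ∈ μ := YoungDiagram.mem_iff_lt_rowLen.2 (by omega)
  have hpe : p = (p.1, p.2) := rfl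
  rw [hp1] at hpe
  -- rewrites for div/mod
  have e1 : (2*t)/2 = t := by omega
  have e2 : (2*t+1)/2 = t := by omega
  have e3 : (2*p.2+1)/2 = p.2 := by omega
  have e4 : (2*p.2)/2 = p.2 := by omega
  have hr1 : inRect μ (2*t, 2*p.2+1) := by
    refine ⟨?_, ?_⟩ <;> simp only [e1]
    · exact htG
    · omega
  have hr2 : inRect μ (2*t+1, 2*p.2) := by
    refine ⟨?_, ?_⟩ <;> simp only [e2]
    · exact htG
    · omega
  have hpA' : ((2*t)/2, (2*p.2+1)/2) ∈ A := by rw [e1, e3, ← hp1]; exact hpA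
  have hpA'' : ((2*t+1)/2, (2*p.2)/2) ∈ A := by rw [e2, e4, ← hp1]; exact hpA
  have hpB' : ((2*t)/2, (2*p.2+1)/2) ∉ B := by rw [e1, e3, ← hp1]; exact hpB
  have hpB'' : ((2*t+1)/2, (2*p.2)/2) ∉ B := by rw [e2, e4, ← hp1]; exact hpB
  have hψA1 : psi μ A (2*t, 2*p.2+1) = 4*p.2 + 2 := by
    unfold psi
    rw [if_pos hr1, if_pos hpA']
    simp only [e3]
    omega
  have hψA2 : psi μ A (2*t+1, 2*p.2) = 4*p.2 + 1 := by
    unfold psi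
    rw [if_pos hr2, if_pos hpA'']
    simp only [e4]
    omega
  have hψB1 : psi μ B (2*t, 2*p.2+1) = 4*p.2 + 1 := by
    unfold psi
    rw [if_pos hr1, if_neg hpB']
    simp only [e3]
    omega
  have hψB2 : psi μ B (2*t+1, 2*p.2) = 4*p.2 + 2 := by
    unfold psi
    rw [if_pos hr2, if_neg hpB'']
    simp only [e4]
    omega
  have hφ : phi μ (2*t, 2*p.2+1) = phi μ (2*t+1, 2*p.2) := by
    unfold phi
    rw [if_pos hr1, if_pos hr2]
    simp only [e1, e2]
  set c1 : ↥μ.cells := ⟨(2*t, 2*p.2+1), (μ.mem_cells _).2 hc1m⟩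
  set c2 : ↥μ.cells := ⟨(2*t+1, 2*p.2), (μ.mem_cells _).2 hc2m⟩
  have hA : TT μ A c2 < TT μ A c1 := by
    rw [TT_lt_iff]
    show key μ A (2*t+1, 2*p.2) < key μ A (2*t, 2*p.2+1)
    unfold key
    rw [hψA1, hψA2, hφ]
    omega
  have hB : TT μ B c1 < TT μ B c2 := by
    rw [TT_lt_iff]
    show key μ B (2*t, 2*p.2+1) < key μ B (2*t+1, 2*p.2)
    unfold key
    rw [hψB1, hψB2, hφ]
    omega
  rw [h] at hA
  exact absurd hB (not_lt_of_gt hA)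

def SYTtype (μ : YoungDiagram) := {T : μ.cells → Fin μ.card //
    Function.Bijective T ∧
    ∀ c d : μ.cells, (c : ℕ × ℕ).1 ≤ (d : ℕ × ℕ).1 → (c : ℕ × ℕ).2 ≤ (d : ℕ × ℕ).2 →
      c ≠ d → T c < T d}

lemma sytCard_eq : sytCard μ = Nat.card (SYTtype μ) := rfl

instance : Finite (SYTtype μ) := by unfold SYTtype; infer_instance

noncomputable def FF (A : ↥(E μ).powerset) : SYTtype μ :=
  ⟨TT μ A.1, TT_bijective μ A.1, TT_mono μ A.1⟩

lemma FF_injective : Function.Injective (FF μ) := by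
  intro A B hAB
  have h : TT μ A.1 = TT μ B.1 := congrArg Subtype.val hAB
  have hA : A.1 ⊆ E μ := Finset.mem_powerset.1 A.2
  have hB : B.1 ⊆ E μ := Finset.mem_powerset.1 B.2
  have h1 : A.1 ⊆ B.1 := by
    have := subset_of_TT_eq μ A.1 B.1 h
    rwa [Finset.inter_eq_left.2 hA] at this
  have h2 : B.1 ⊆ A.1 := by
    have := subset_of_TT_eq μ B.1 A.1 h.symm
    rwa [Finset.inter_eq_left.2 hB] at this
  exact Subtype.ext (Finset.Subset.antisymm h1 h2)

lemma pow_le_sytCard : 2 ^ (E μ).card ≤ sytCard μ := by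
  have h := Nat.card_le_card_of_injective (FF μ) (FF_injective μ)
  rwa [Nat.card_eq_finsetCard, Finset.card_powerset, ← sytCard_eq] at h

end SYTaux

namespace SYTaux

variable (μ : YoungDiagram)

lemma card_eq_sum_rowLen : μ.card = ∑ i ∈ Finset.range (μ.colLen 0), μ.rowLen i := by
  have hcells : μ.cells =
      (Finset.range (μ.colLen 0)).biUnion (fun i => {i} ×ˢ Finset.range (μ.rowLen i)) := by
    ext c
    simp only [Finset.mem_biUnion, Finset.mem_range, Finset.mem_product, Finset.mem_singleton]
    constructor
    · intro hc
      have hc' : c ∈ μ := (μ.mem_cells c).1 hc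
      refine ⟨c.1, fst_lt_of_mem μ hc', rfl, ?_⟩
      exact YoungDiagram.mem_iff_lt_rowLen.1 (show (c.1, c.2) ∈ μ by simpa using hc')
    · rintro ⟨i, _, rfl, hj⟩
      exact (μ.mem_cells c).2 (by
        have : (c.1, c.2) ∈ μ := YoungDiagram.mem_iff_lt_rowLen.2 hj
        simpa using this)
  have hdisj : ∀ x ∈ Finset.range (μ.colLen 0), ∀ y ∈ Finset.range (μ.colLen 0), x ≠ y →
      Disjoint ({x} ×ˢ Finset.range (μ.rowLen x)) ({y} ×ˢ Finset.range (μ.rowLen y)) := by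
    intro x _ y _ hxy
    rw [Finset.disjoint_left]
    rintro c hc hc'
    rw [Finset.mem_product, Finset.mem_singleton] at hc hc'
    exact hxy (hc.1.symm.trans hc'.1)
  show μ.cells.card = _
  rw [hcells, Finset.card_biUnion hdisj]
  congr 1
  ext i
  rw [Finset.card_product, Finset.card_singleton, Finset.card_range, one_mul]

lemma pair_sum (f : ℕ → ℕ) (q : ℕ) :
    ∑ i ∈ Finset.range (2*q), f i = ∑ t ∈ Finset.range q, (f (2*t) + f (2*t+1)) := by
  induction q with
  | zero => simp
  | succ q ih =>
      rw [show 2*(q+1) = (2*q+1)+1 by ring, Finset.sum_range_succ, Finset.sum_range_succ,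
        Finset.sum_range_succ, ih]
      ring

lemma decay_sum (S : Finset ℕ)
    (hS : ∀ t ∈ S, 3 * μ.rowLen (2*t+1) < μ.rowLen (2*t)) :
    ∀ s : ℕ, (∀ t ∈ S, s ≤ t) → 2 * ∑ t ∈ S, μ.rowLen (2*t) ≤ 3 * μ.rowLen (2*s) := by
  classical
  induction S using Finset.induction_on_min with
  | empty => intro s _; simp
  | insert a S ha ih =>
      intro s hs
      have haS : a ∉ S := fun h => lt_irrefl a (ha a h)
      rw [Finset.sum_insert haS]
      have h1 : 2 * ∑ t ∈ S, μ.rowLen (2*t) ≤ 3 * μ.rowLen (2*(a+1)) := by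
        apply ih
        · intro t ht; exact hS t (Finset.mem_insert_of_mem ht)
        · intro t ht; exact ha t ht
      have h2 : μ.rowLen (2*(a+1)) ≤ μ.rowLen (2*a+1) := μ.rowLen_anti _ _ (by omega)
      have h3 : 3 * μ.rowLen (2*a+1) < μ.rowLen (2*a) := hS a (Finset.mem_insert_self a S)
      have h4 : μ.rowLen (2*a) ≤ μ.rowLen (2*s) := μ.rowLen_anti _ _ (by
        have := hs a (Finset.mem_insert_self a S); omega)
      omega

lemma mass_bound : μ.card ≤ 12 * (E μ).card + 3 * μ.rowLen 0 + 2 * μ.colLen 0 := by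
  classical
  set k := μ.colLen 0 with hk
  set q := k / 2 with hq
  -- the sum over all rows
  have h0 : μ.card = ∑ i ∈ Finset.range k, μ.rowLen i := card_eq_sum_rowLen μ
  have hsplit : ∑ i ∈ Finset.range k, μ.rowLen i ≤
      ∑ i ∈ Finset.range (2*q), μ.rowLen i + μ.rowLen 0 := by
    rcases Nat.lt_or_ge k (2*q+1) with h | h
    · have : k ≤ 2*q := by omega
      calc ∑ i ∈ Finset.range k, μ.rowLen i ≤ ∑ i ∈ Finset.range (2*q), μ.rowLen i :=
            Finset.sum_le_sum_of_subset (Finset.range_subset_range.2 this)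
      _ ≤ _ := Nat.le_add_right _ _
    · have hk2 : k = 2*q+1 := by omega
      rw [hk2, Finset.sum_range_succ]
      have : μ.rowLen (2*q) ≤ μ.rowLen 0 := μ.rowLen_anti _ _ (Nat.zero_le _)
      omega
  rw [pair_sum] at hsplit
  -- split range q into good / decay / small
  set f : ℕ → ℕ := fun t => μ.rowLen (2*t) + μ.rowLen (2*t+1) with hf
  have hsplit2 : ∑ t ∈ Finset.range q, f t =
      ∑ t ∈ G μ, f t + ∑ t ∈ (Finset.range q).filter (fun t => ¬ goodt μ t), f t := by
    rw [G, ← Finset.sum_filter_add_sum_filter_not (Finset.range q) (goodt μ) f]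
  set B := (Finset.range q).filter (fun t => ¬ goodt μ t) with hB
  set B1 := B.filter (fun t => 3 * μ.rowLen (2*t+1) < μ.rowLen (2*t)) with hB1
  set B2 := B.filter (fun t => ¬ 3 * μ.rowLen (2*t+1) < μ.rowLen (2*t)) with hB2
  have hsplit3 : ∑ t ∈ B, f t = ∑ t ∈ B1, f t + ∑ t ∈ B2, f t :=
    (Finset.sum_filter_add_sum_filter_not B _ f).symm
  -- good pairs
  have hgood : ∑ t ∈ G μ, f t ≤ 12 * ∑ t ∈ G μ, mm μ t := by
    rw [Finset.mul_sum]
    apply Finset.sum_le_sum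
    intro t ht
    have hg : goodt μ t := (Finset.mem_filter.1 ht).2
    obtain ⟨hg1, hg2⟩ := hg
    have : mm μ t = μ.rowLen (2*t+1) / 2 := rfl
    simp only [hf]
    omega
  -- decay pairs
  have hdecay : ∑ t ∈ B1, f t ≤ 2 * μ.rowLen 0 := by
    have hd : ∀ t ∈ B1, 3 * μ.rowLen (2*t+1) < μ.rowLen (2*t) := by
      intro t ht; exact (Finset.mem_filter.1 ht).2
    have h1 : 2 * ∑ t ∈ B1, μ.rowLen (2*t) ≤ 3 * μ.rowLen 0 := by
      have := decay_sum μ B1 hd 0 (fun t _ => Nat.zero_le t)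
      simpa using this
    have h2 : 3 * ∑ t ∈ B1, f t ≤ 4 * ∑ t ∈ B1, μ.rowLen (2*t) := by
      rw [Finset.mul_sum, Finset.mul_sum]
      apply Finset.sum_le_sum
      intro t ht
      have := hd t ht
      simp only [hf]
      omega
    omega
  -- small pairs
  have hsmall : ∑ t ∈ B2, f t ≤ 2 * k := by
    calc ∑ t ∈ B2, f t ≤ ∑ _t ∈ B2, 4 := by
          apply Finset.sum_le_sum
          intro t ht
          rw [Finset.mem_filter, hB, Finset.mem_filter] at ht
          obtain ⟨⟨_, hng⟩, hnd⟩ := ht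
          rw [goodt] at hng
          push_neg at hng
          simp only [hf]
          omega
    _ = 4 * B2.card := by rw [Finset.sum_const]; ring
    _ ≤ 4 * q := by
          have : B2 ⊆ Finset.range q := by
            rw [hB2, hB]; intro t ht
            exact Finset.mem_of_mem_filter _ (Finset.mem_of_mem_filter _ ht)
          have := Finset.card_le_card this
          rw [Finset.card_range] at this
          omega
    _ ≤ 2 * k := by omega
  -- E card
  have hE : (E μ).card = ∑ t ∈ G μ, mm μ t := by
    rw [E, Finset.card_biUnion]
    · apply Finset.sum_congr rfl
      intro t _
      rw [Finset.card_product, Finset.card_singleton, Finset.card_range, one_mul]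
    · intro x _ y _ hxy
      rw [Function.onFun, Finset.disjoint_left]
      rintro c hc hc'
      rw [Finset.mem_product, Finset.mem_singleton] at hc hc'
      exact hxy (hc.1.symm.trans hc'.1)
  have hq : 2 * q ≤ k := by omega
  have heta : (Finset.range q).sum f = ∑ t ∈ Finset.range q, f t := rfl
  have htotal : μ.card ≤ (∑ t ∈ G μ, f t) + ((∑ t ∈ B1, f t) + (∑ t ∈ B2, f t)) + μ.rowLen 0 := by
    rw [h0]
    calc ∑ i ∈ Finset.range k, μ.rowLen i ≤ (Finset.range q).sum f + μ.rowLen 0 := hsplit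
    _ = (∑ t ∈ G μ, f t + ∑ t ∈ B, f t) + μ.rowLen 0 := by rw [heta, hsplit2]
    _ = _ := by rw [hsplit3]
  have h12 : (∑ t ∈ G μ, f t) ≤ 12 * (E μ).card := by rw [hE]; exact hgood
  linarith [htotal, h12, hdecay, hsmall]

end SYTaux

theorem stmt_0 :
    ∀ α : ℝ, 0 < α → α < 1 / (2 * Real.exp 1) →
    ∃ β : ℝ, 1 < β ∧ ∃ n₀ : ℕ, ∀ n : ℕ, n₀ ≤ n → ∀ μ : YoungDiagram, μ.card = n →
      (max (μ.rowLen 0) (μ.colLen 0) : ℝ) < α * n →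
      β ^ n ≤ (sytCard μ : ℝ) := by
  intro α hα hα2
  have he : (2.7182818283 : ℝ) < Real.exp 1 := Real.exp_one_gt_d9
  have hexp : (0:ℝ) < Real.exp 1 := by linarith
  have h5 : 5 * α < 1 := by
    have h1 : α * (2 * Real.exp 1) < 1 := by
      have := (div_lt_div_iff₀ (by positivity) (by positivity)).1
        (show α / 1 < 1 / (2 * Real.exp 1) by rwa [div_one])
      linarith
    nlinarith
  set e : ℝ := (1 - 5*α)/12 with hedef
  have hepos : 0 < e := by rw [hedef]; linarith
  refine ⟨(2:ℝ) ^ e, ?_, 1, ?_⟩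
  · rw [Real.one_lt_rpow_iff_of_pos (by norm_num)]
    left
    exact ⟨by norm_num, hepos⟩
  intro n hn μ hcard hmax
  set M : ℕ := (SYTaux.E μ).card with hM
  have hmass : μ.card ≤ 12 * M + 3 * μ.rowLen 0 + 2 * μ.colLen 0 := SYTaux.mass_bound μ
  have hr : (μ.rowLen 0 : ℝ) < α * n := by
    exact lt_of_le_of_lt (le_max_left _ _) hmax
  have hc : (μ.colLen 0 : ℝ) < α * n := by
    exact lt_of_le_of_lt (le_max_right _ _) hmax
  have hmassR : (n:ℝ) ≤ 12 * M + 3 * μ.rowLen 0 + 2 * μ.colLen 0 := by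
    rw [← hcard]
    exact_mod_cast hmass
  have hMn : e * n ≤ (M:ℝ) := by
    rw [hedef]
    nlinarith [hr, hc, hmassR]
  have hsyt : 2 ^ M ≤ sytCard μ := SYTaux.pow_le_sytCard μ
  calc ((2:ℝ) ^ e) ^ n = (2:ℝ) ^ (e * n) := by
        rw [← Real.rpow_natCast ((2:ℝ)^e) n, ← Real.rpow_mul (by norm_num)]
  _ ≤ (2:ℝ) ^ ((M:ℝ)) := Real.rpow_le_rpow_of_exponent_le (by norm_num) hMn
  _ = ((2^M : ℕ) : ℝ) := by rw [Real.rpow_natCast]; push_cast; ring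
  _ ≤ (sytCard μ : ℝ) := Nat.cast_le.2 hsyt
end

section
/- For every partition λ of n and every 1 ≤ k ≤ λ₁, the product of the first-row hook lengths satisfies ∏_{j=1}^{λ₁} h_{1,j} ≤ C(n,k) · (λ₁ + ⌊(n - λ₁)/k⌋)!. -/
open Nat

lemma card_eq_sum_colLen (μ : YoungDiagram) :
    μ.card = ∑ j ∈ Finset.range (μ.rowLen 0), μ.colLen j := by
  classical
  have hcells : μ.cells = (Finset.range (μ.rowLen 0)).biUnion μ.col := by
    ext ⟨i, j⟩
    simp only [Finset.mem_biUnion, Finset.mem_range, YoungDiagram.mem_col_iff,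
      YoungDiagram.mem_cells]
    constructor
    · intro h
      refine ⟨j, ?_, h, rfl⟩
      exact lt_of_lt_of_le (YoungDiagram.mem_iff_lt_rowLen.mp h)
        (μ.rowLen_anti 0 i (Nat.zero_le i))
    · rintro ⟨a, _, hmem, rfl⟩; exact hmem
  have : μ.card = μ.cells.card := rfl
  rw [this, hcells, Finset.card_biUnion]
  · exact Finset.sum_congr rfl fun j _ => (μ.colLen_eq_card).symm
  · intro a _ b _ hab
    simp only [Finset.disjoint_left]
    intro c hc hc'
    rw [YoungDiagram.mem_col_iff] at hc hc'
    exact hab (hc.2 ▸ hc'.2)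


theorem stmt_3 (μ : YoungDiagram) (n k : ℕ) (hn : μ.card = n)
    (hk1 : 1 ≤ k) (hk2 : k ≤ μ.rowLen 0) :
    ∏ j ∈ Finset.range (μ.rowLen 0), hook μ 0 j ≤
      n.choose k * (μ.rowLen 0 + (n - μ.rowLen 0) / k) ! := by
  classical
  set m := μ.rowLen 0 with hm
  set q := (n - m) / k with hq
  have hkm : k ≤ m := hk2
  clear_value m q
  have hcol1 : ∀ j, j < m → 1 ≤ μ.colLen j := by
    intro j hj
    rw [Nat.succ_le_iff, ← YoungDiagram.mem_iff_lt_colLen]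
    exact YoungDiagram.mem_iff_lt_rowLen.mpr (hm ▸ hj)
  have hsum : ∑ j ∈ Finset.range m, μ.colLen j = n := by
    rw [hm, ← card_eq_sum_colLen, hn]
  have hmn : m ≤ n := by
    rw [← hsum]
    calc m = ∑ _j ∈ Finset.range m, 1 := by simp
    _ ≤ ∑ j ∈ Finset.range m, μ.colLen j :=
      Finset.sum_le_sum fun j hj => hcol1 j (Finset.mem_range.mp hj)
  have hsum' : ∑ j ∈ Finset.range m, (μ.colLen j - 1) = n - m := by
    have h1 : ∑ j ∈ Finset.range m, ((μ.colLen j - 1) + 1) = n := by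
      rw [← hsum]
      refine Finset.sum_congr rfl fun j hj => ?_
      have := hcol1 j (Finset.mem_range.mp hj); omega
    rw [Finset.sum_add_distrib] at h1
    simp only [Finset.sum_const, Finset.card_range, smul_eq_mul, mul_one] at h1
    omega
  -- colLen 0 - 1 ≤ n - m
  have hc0 : μ.colLen 0 - 1 ≤ n - m := by
    rw [← hsum']
    exact Finset.single_le_sum (f := fun j => μ.colLen j - 1) (fun i _ => Nat.zero_le _)
      (Finset.mem_range.mpr (lt_of_lt_of_le hk1 hkm))
  -- hook value
  have hookeq : ∀ j, j < m → hook μ 0 j = (m - j) + (μ.colLen j - 1) := by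
    intro j hj
    have h1 := hcol1 j hj
    unfold hook
    rw [← hm]
    omega
  -- bound for j ≥ k - 1
  have hcolq : ∀ j, k ≤ j + 1 → j < m → μ.colLen j - 1 ≤ q := by
    intro j hkj hjm
    have hmul : k * (μ.colLen j - 1) ≤ n - m := by
      calc k * (μ.colLen j - 1) = ∑ _i ∈ Finset.range k, (μ.colLen j - 1) := by
            rw [Finset.sum_const, Finset.card_range, smul_eq_mul]
      _ ≤ ∑ i ∈ Finset.range k, (μ.colLen i - 1) := by
            refine Finset.sum_le_sum fun i hi => ?_
            have hij : i ≤ j := by have := Finset.mem_range.mp hi; omega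
            have := μ.colLen_anti i j hij
            omega
      _ ≤ ∑ j ∈ Finset.range m, (μ.colLen j - 1) :=
            Finset.sum_le_sum_of_subset (Finset.range_subset_range.mpr hkm)
      _ = n - m := hsum'
    rw [hq, Nat.le_div_iff_mul_le hk1, mul_comm]
    exact hmul
  -- split product
  have hk1m : k - 1 ≤ m := by omega
  rw [← Finset.prod_range_mul_prod_Ico (hook μ 0) hk1m]
  have hP1 : ∏ j ∈ Finset.range (k - 1), hook μ 0 j ≤ ∏ j ∈ Finset.range (k - 1), (n - j) := by
    refine Finset.prod_le_prod' fun j hj => ?_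
    have hjk : j < k - 1 := Finset.mem_range.mp hj
    have hjm : j < m := lt_of_lt_of_le hjk hk1m
    rw [hookeq j hjm]
    have h2 := μ.colLen_anti 0 j (Nat.zero_le j)
    omega
  have hP2 : ∏ j ∈ Finset.Ico (k - 1) m, hook μ 0 j ≤
      ∏ j ∈ Finset.Ico (k - 1) m, (m + q - j) := by
    refine Finset.prod_le_prod' fun j hj => ?_
    obtain ⟨h1, h2⟩ := Finset.mem_Ico.mp hj
    rw [hookeq j h2]
    have := hcolq j (by omega) h2
    omega
  have hP2' : ∏ j ∈ Finset.Ico (k - 1) m, (m + q - j) =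
      (m + q - (k - 1)).descFactorial (m - (k - 1)) := by
    rw [Finset.prod_Ico_eq_prod_range, Nat.descFactorial_eq_prod_range]
    refine Finset.prod_congr rfl fun i hi => ?_
    have := Finset.mem_range.mp hi
    omega
  calc (∏ j ∈ Finset.range (k - 1), hook μ 0 j) * ∏ j ∈ Finset.Ico (k - 1) m, hook μ 0 j
      ≤ n.descFactorial (k - 1) * (m + q - (k - 1)).descFactorial (m - (k - 1)) := by
        refine Nat.mul_le_mul ?_ ?_
        · rw [Nat.descFactorial_eq_prod_range]; exact hP1
        · rw [← hP2']; exact hP2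
    _ ≤ n.descFactorial (k - 1) * (m + q - (k - 1))! := by
        refine Nat.mul_le_mul_left _ ?_
        calc (m + q - (k - 1)).descFactorial (m - (k - 1))
            ≤ (m + q - (k - 1) - (m - (k - 1)))! *
                (m + q - (k - 1)).descFactorial (m - (k - 1)) :=
              Nat.le_mul_of_pos_left _ (Nat.factorial_pos _)
          _ = (m + q - (k - 1))! := Nat.factorial_mul_descFactorial (by omega)
    _ ≤ (n.choose k * k !) * (m + q - (k - 1))! := by
        refine Nat.mul_le_mul_right _ ?_
        have h1 : n.descFactorial k = (n - (k - 1)) * n.descFactorial (k - 1) := by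
          conv_lhs => rw [show k = (k - 1) + 1 by omega]
          rw [Nat.descFactorial_succ]
        have h2 : n.descFactorial (k - 1) ≤ n.descFactorial k := by
          rw [h1]; exact Nat.le_mul_of_pos_left _ (by omega)
        calc n.descFactorial (k - 1) ≤ n.descFactorial k := h2
          _ = k ! * n.choose k := Nat.descFactorial_eq_factorial_mul_choose n k
          _ = n.choose k * k ! := mul_comm _ _
    _ ≤ n.choose k * (m + q)! := by
        rw [mul_assoc]
        refine Nat.mul_le_mul_left _ ?_
        have hfac : (m + q).choose (k - 1) * (k - 1)! * (m + q - (k - 1))! = (m + q)! :=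
          Nat.choose_mul_factorial_mul_factorial (by omega)
        have hch : k ≤ (m + q).choose (k - 1) := by
          have h3 : k.choose (k - 1) ≤ (m + q).choose (k - 1) :=
            Nat.choose_le_choose _ (by omega)
          have h4 : k.choose (k - 1) = k := by
            rw [← Nat.choose_symm (by omega : k - 1 ≤ k), show k - (k - 1) = 1 by omega,
              Nat.choose_one_right]
          omega
        calc k ! * (m + q - (k - 1))! = k * ((k - 1)! * (m + q - (k - 1))!) := by
              rw [← Nat.mul_factorial_pred (by omega : k ≠ 0), mul_assoc]
          _ ≤ (m + q).choose (k - 1) * ((k - 1)! * (m + q - (k - 1))!) :=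
              Nat.mul_le_mul_right _ hch
          _ = (m + q)! := by rw [← hfac, mul_assoc]
end
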